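/- arXiv:1711.07239 — 3 statements merged into one kernel-verified Lean document; each statement's English description precedes it below -/
import Mathlib

section
/- Let k be a field, P = k[x_1,...,x_n] a polynomial ring, f_1,...,f_s ∈ P homogeneous polynomials of degree ≥ 2, and R = P/(f_1,...,f_s). If for some q ≥ 1 there exists a surjective R-module homomorphism from the q-th symmetric power Sym^q_R(Ω_{R/k}) onto R, then there exists a surjective R-module homomorphism from Ω_{R/k} onto R. -/
open scoped TensorProduct
open PiTensorProduct

/-- The submodule of relations defining the `q`-th symmetric power. -/
def symRel (R M : Type*) [CommRing R] [AddCommGroup M] [Module R M] (q : ℕ) :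
    Submodule R (⨂[R]^q M) :=
  Submodule.span R {x | ∃ (σ : Equiv.Perm (Fin q)) (v : Fin q → M),
    x = PiTensorProduct.tprod R v - PiTensorProduct.tprod R (v ∘ σ)}

/-- The `q`-th symmetric power of a module, as a quotient of the `q`-th tensor power. -/
abbrev SymPow (R M : Type*) [CommRing R] [AddCommGroup M] [Module R M] (q : ℕ) :=
  (⨂[R]^q M) ⧸ symRel R M q

section Aux

open MvPolynomial

/-- Scaling all variables of a homogeneous polynomial by a common factor. -/
lemma aeval_mul_homog {σ k A : Type*} [CommRing k] [CommRing A] [Algebra k A]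
    {p : MvPolynomial σ k} {t : ℕ} (hp : p.IsHomogeneous t) (r : A) (v : σ → A) :
    aeval (fun i => r * v i) p = r ^ t * aeval v p := by
  conv_lhs => rw [p.as_sum]
  conv_rhs => rw [p.as_sum]
  rw [map_sum, map_sum, Finset.mul_sum]
  refine Finset.sum_congr rfl fun s hs => ?_
  have hdeg : s.degree = t := by
    by_contra hne
    exact (mem_support_iff.mp hs) (hp.coeff_eq_zero hne)
  rw [aeval_monomial, aeval_monomial, Finsupp.prod, Finsupp.prod]
  simp_rw [mul_pow]
  rw [Finset.prod_mul_distrib, Finset.prod_pow_eq_pow_sum]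
  have : ∑ i ∈ s.support, s i = t := hdeg
  rw [this]
  ring

lemma Finsupp.degree_add'' {σ : Type*} (a b : σ →₀ ℕ) :
    (a + b).degree = a.degree + b.degree := by
  simp only [Finsupp.degree_eq_weight_one, map_add]

/-- The partial derivative of a homogeneous polynomial is homogeneous. -/
lemma isHomog_pderiv {σ k : Type*} [CommRing k] [DecidableEq σ]
    {p : MvPolynomial σ k} {t : ℕ} (hp : p.IsHomogeneous t) (j : σ) :
    (pderiv j p).IsHomogeneous (t - 1) := by
  conv_lhs => rw [p.as_sum]
  rw [map_sum]
  apply MvPolynomial.IsHomogeneous.sum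
  intro s hs
  rw [pderiv_monomial]
  by_cases h0 : s j = 0
  · rw [h0]
    simp only [Nat.cast_zero, mul_zero, map_zero]
    exact isHomogeneous_zero _ _ _
  · apply isHomogeneous_monomial
    have hdeg : s.degree = t := by
      by_contra hne
      exact (mem_support_iff.mp hs) (hp.coeff_eq_zero hne)
    have hsum : (s - Finsupp.single j 1) + Finsupp.single j 1 = s := by
      ext i
      simp only [Finsupp.add_apply, Finsupp.tsub_apply, Finsupp.single_apply]
      by_cases hij : j = i
      · subst hij; simp only [eq_self_iff_true, if_true]; omega
      · simp [hij]
    have h1 : (Finsupp.single j 1 : σ →₀ ℕ).degree = 1 := by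
      exact Finsupp.degree_single j 1
    have := congrArg Finsupp.degree hsum
    rw [Finsupp.degree_add'', h1, hdeg] at this
    omega

/-- Chain rule for the universal derivation composed with a map from a polynomial ring. -/
lemma D_pi_eq {k : Type*} [Field k] {n : ℕ} {R : Type*} [CommRing R] [Algebra k R]
    (π : MvPolynomial (Fin n) k →ₐ[k] R) (p : MvPolynomial (Fin n) k) :
    KaehlerDifferential.D k R (π p) =
      ∑ j : Fin n, π (pderiv j p) • KaehlerDifferential.D k R (π (X j)) := by
  induction p using MvPolynomial.induction_on with
  | C a =>
      simp only [algHom_C, Derivation.map_algebraMap, pderiv_C, map_zero, zero_smul,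
        Finset.sum_const_zero]
  | add p p' hp hp' =>
      simp only [map_add, hp, hp', ← Finset.sum_add_distrib, add_smul]
  | mul_X p i hp =>
      rw [_root_.map_mul, Derivation.leibniz, hp]
      have step : (∑ j : Fin n, π (pderiv j (p * X i)) • KaehlerDifferential.D k R (π (X j))) =
          ∑ j : Fin n, (π (X i) • (π (pderiv j p) • KaehlerDifferential.D k R (π (X j))) +
            (if i = j then π p • KaehlerDifferential.D k R (π (X j)) else 0)) := by
        refine Finset.sum_congr rfl fun j _ => ?_
        rw [pderiv_mul]
        by_cases hij : i = j
        · subst hij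
          rw [pderiv_X_self, mul_one, map_add, _root_.map_mul, add_smul, if_pos rfl, smul_smul,
            mul_comm (π (pderiv i p))]
        · rw [pderiv_X_of_ne hij, mul_zero, add_zero, if_neg hij, add_zero, _root_.map_mul,
            mul_comm, mul_smul]
      rw [step, Finset.sum_add_distrib, ← Finset.smul_sum, Finset.sum_ite_eq]
      simp only [Finset.mem_univ, if_true]
      exact add_comm _ _

/-- Tensor powers are spanned by pure tensors of elements of a spanning family. -/
lemma span_tprod_gen {R M : Type*} [CommRing R] [AddCommGroup M] [Module R M]
    {κ : Type*} (g : κ → M) (hg : Submodule.span R (Set.range g) = ⊤) (q : ℕ) :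
    Submodule.span R {x : ⨂[R]^q M | ∃ ι : Fin q → κ, x = tprod R (g ∘ ι)} = ⊤ := by
  classical
  set S := Submodule.span R {x : ⨂[R]^q M | ∃ ι : Fin q → κ, x = tprod R (g ∘ ι)} with hS
  rw [Submodule.eq_top_iff']
  have key : ∀ (j : ℕ), j ≤ q → ∀ v : Fin q → M,
      (∀ i : Fin q, j ≤ (i : ℕ) → v i ∈ Set.range g) → tprod R v ∈ S := by
    intro j
    induction j with
    | zero =>
        intro _ v hv
        choose ι hι using fun i => hv i (Nat.zero_le _)
        refine Submodule.subset_span ⟨ι, ?_⟩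
        congr 1
        funext i
        exact (hι i).symm
    | succ j ih =>
        intro hj v hv
        have hjq : j < q := hj
        set j' : Fin q := ⟨j, hjq⟩ with hj'
        have main : ∀ x ∈ Submodule.span R (Set.range g),
            tprod R (Function.update v j' x) ∈ S := by
          intro x hx
          induction hx using Submodule.span_induction with
          | mem x hx =>
              refine ih (le_of_lt hjq) _ fun i hi => ?_
              by_cases hij : i = j'
              · subst hij; rw [Function.update_self]; exact hx
              · rw [Function.update_of_ne hij]
                refine hv i ?_
                have hne : (i : ℕ) ≠ j := fun hh => hij (Fin.ext hh)
                omega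
          | zero =>
              rw [MultilinearMap.map_update_zero]
              exact S.zero_mem
          | add x y _ _ hx hy =>
              rw [MultilinearMap.map_update_add]
              exact S.add_mem hx hy
          | smul r x _ hx =>
              rw [MultilinearMap.map_update_smul]
              exact S.smul_mem r hx
        have := main (v j') (by rw [hg]; trivial)
        rwa [Function.update_eq_self] at this
  intro x
  induction x using PiTensorProduct.induction_on with
  | smul_tprod r v =>
      exact S.smul_mem r (key q le_rfl v (fun i hi => absurd hi (by omega)))
  | add x y hx hy => exact S.add_mem hx hy

end Aux

/-- For `R = k[x₁,…,xₙ]/(f₁,…,f_s)` with the `fᵢ` homogeneous of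
degree `≥ 2`, a surjection `Sym^q(Ω_{R/k}) ↠ R` for some `q ≥ 1` yields a
surjection `Ω_{R/k} ↠ R`. -/
theorem stmt3 {k : Type*} [Field k] {n s : ℕ}
    (f : Fin s → MvPolynomial (Fin n) k) (d : Fin s → ℕ)
    (hd : ∀ i, 2 ≤ d i) (hhom : ∀ i, (f i).IsHomogeneous (d i))
    (R : Type*) [CommRing R] [Algebra k R]
    (e : (MvPolynomial (Fin n) k ⧸ Ideal.span (Set.range f)) ≃ₐ[k] R)
    (q : ℕ) (hq : 1 ≤ q)
    (h : ∃ φ : SymPow R (Ω[R⁄k]) q →ₗ[R] R, Function.Surjective φ) :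
    ∃ ψ : Ω[R⁄k] →ₗ[R] R, Function.Surjective ψ := by
  classical
  obtain ⟨φ, hφ⟩ := h
  set I : Ideal (MvPolynomial (Fin n) k) := Ideal.span (Set.range f) with hI
  set π : MvPolynomial (Fin n) k →ₐ[k] R := e.toAlgHom.comp (Ideal.Quotient.mkₐ k I) with hπ
  have hπs : Function.Surjective π := by
    intro r
    obtain ⟨p, hp⟩ := Ideal.Quotient.mk_surjective (I := I) (e.symm r)
    refine ⟨p, ?_⟩
    simp [hπ, Ideal.Quotient.mkₐ_eq_mk, hp]
  have hπI : ∀ a ∈ I, π a = 0 := by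
    intro a ha
    have h0 : Ideal.Quotient.mk I a = 0 := Ideal.Quotient.eq_zero_iff_mem.mpr ha
    simp [hπ, Ideal.Quotient.mkₐ_eq_mk, h0]
  have hπf : ∀ m, π (f m) = 0 := fun m => hπI _ (Ideal.subset_span ⟨m, rfl⟩)
  -- the augmentation ε : R → k
  have hIε : ∀ a ∈ I, (MvPolynomial.aeval (0 : Fin n → k)) a = 0 := by
    have hle : I ≤ RingHom.ker ((MvPolynomial.aeval (0 : Fin n → k) :
        MvPolynomial (Fin n) k →ₐ[k] k) : MvPolynomial (Fin n) k →+* k) := by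
      rw [hI, Ideal.span_le]
      rintro x ⟨m, rfl⟩
      simp only [SetLike.mem_coe, RingHom.mem_ker]
      have h2 : MvPolynomial.constantCoeff (f m) = 0 := by
        rw [MvPolynomial.constantCoeff_eq]
        refine (hhom m).coeff_eq_zero ?_
        have := hd m
        simp only [map_zero]
        omega
      show MvPolynomial.aeval (0 : Fin n → k) (f m) = 0
      rw [MvPolynomial.aeval_zero, h2, map_zero]
    intro a ha
    exact hle ha
  set ε : R →ₐ[k] k :=
    (Ideal.Quotient.liftₐ I (MvPolynomial.aeval (0 : Fin n → k)) hIε).comp e.symm.toAlgHom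
    with hεdef
  have hεπ : ∀ p, ε (π p) = MvPolynomial.aeval (0 : Fin n → k) p := by
    intro p
    simp [hεdef, hπ, Ideal.Quotient.mkₐ_eq_mk, Ideal.Quotient.liftₐ_apply]
  -- the scaling map σA : R → R[T]
  set τ : MvPolynomial (Fin n) k →ₐ[k] Polynomial R :=
    MvPolynomial.aeval
      (fun i => (Polynomial.X : Polynomial R) * Polynomial.C (π (MvPolynomial.X i))) with hτdef
  have hτhom : ∀ (p : MvPolynomial (Fin n) k) (t : ℕ), p.IsHomogeneous t →
      τ p = Polynomial.X ^ t * Polynomial.C (π p) := by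
    intro p t hp
    rw [hτdef]
    rw [show (MvPolynomial.aeval
        (fun i => (Polynomial.X : Polynomial R) * Polynomial.C (π (MvPolynomial.X i)))) p
      = Polynomial.X ^ t *
        (MvPolynomial.aeval (fun i => Polynomial.C (π (MvPolynomial.X i)))) p from
      aeval_mul_homog hp _ _]
    congr 1
    have h1 : MvPolynomial.aeval (fun i => π (MvPolynomial.X i)) p = π p := by
      have h1' := MvPolynomial.comp_aeval_apply MvPolynomial.X π p
      rw [MvPolynomial.aeval_X_left_apply] at h1'
      exact h1'.symm
    calc (MvPolynomial.aeval (fun i => Polynomial.C (π (MvPolynomial.X i)))) p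
        = ((Polynomial.CAlgHom (R := R) (A := R)).restrictScalars k)
            ((MvPolynomial.aeval (fun i => π (MvPolynomial.X i))) p) := by
          rw [MvPolynomial.comp_aeval_apply]
          rfl
      _ = Polynomial.C (π p) := by rw [h1]; rfl
  have hτI : ∀ a ∈ I, τ a = 0 := by
    have hle : I ≤ RingHom.ker (τ : MvPolynomial (Fin n) k →+* Polynomial R) := by
      rw [hI, Ideal.span_le]
      rintro x ⟨m, rfl⟩
      simp only [SetLike.mem_coe, RingHom.mem_ker]
      show τ (f m) = 0
      rw [hτhom (f m) (d m) (hhom m), hπf m, map_zero, mul_zero]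
    intro a ha
    exact hle ha
  set σA : R →ₐ[k] Polynomial R := (Ideal.Quotient.liftₐ I τ hτI).comp e.symm.toAlgHom with hσAdef
  have hσπ : ∀ p, σA (π p) = τ p := by
    intro p
    simp [hσAdef, hπ, Ideal.Quotient.mkₐ_eq_mk, Ideal.Quotient.liftₐ_apply]
    rfl
  set ev0 : Polynomial R →ₐ[k] R := (Polynomial.aeval (0 : R)).restrictScalars k with hev0def
  have hev0C : ∀ x : R, ev0 (Polynomial.C x) = x := by
    intro x; simp [hev0def]
  have hev0σ : ∀ r : R, ev0 (σA r) = algebraMap k R (ε r) := by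
    intro r
    obtain ⟨p, rfl⟩ := hπs r
    rw [hσπ, hεπ, hτdef, MvPolynomial.comp_aeval_apply _ ev0 p]
    have h2 : (algebraMap k R) (MvPolynomial.aeval (0 : Fin n → k) p)
        = MvPolynomial.aeval (fun _ : Fin n => (0 : R)) p := by
      rw [show (algebraMap k R) (MvPolynomial.aeval (0 : Fin n → k) p)
          = (Algebra.ofId k R) ((MvPolynomial.aeval (0 : Fin n → k)) p) from rfl,
        MvPolynomial.comp_aeval_apply _ (Algebra.ofId k R) p]
      have hfun : (fun i : Fin n => (Algebra.ofId k R) ((0 : Fin n → k) i))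
          = fun _ : Fin n => (0 : R) := by
        funext i; simp [Algebra.ofId_apply]
      rw [hfun]
    rw [h2]
    have hfun2 : (fun i : Fin n =>
        ev0 (Polynomial.X * Polynomial.C (π (MvPolynomial.X i)))) = fun _ : Fin n => (0 : R) := by
      funext i
      show (Polynomial.aeval (0 : R)) (Polynomial.X * Polynomial.C (π (MvPolynomial.X i))) = 0
      simp
    rw [hfun2]
  -- Kaehler differentials
  set dgen : Fin n → (Ω[R⁄k]) := fun i => KaehlerDifferential.D k R (π (MvPolynomial.X i))
    with hdgen
  have hkey : ∀ p, KaehlerDifferential.D k R (π p)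
      = ∑ j : Fin n, π (MvPolynomial.pderiv j p) • dgen j := fun p => D_pi_eq π p
  have hspan : Submodule.span R (Set.range dgen) = ⊤ := by
    rw [eq_top_iff, ← KaehlerDifferential.span_range_derivation, Submodule.span_le]
    rintro _ ⟨r, rfl⟩
    obtain ⟨p, rfl⟩ := hπs r
    rw [hkey]
    exact Submodule.sum_mem _ fun j _ =>
      Submodule.smul_mem _ _ (Submodule.subset_span ⟨j, rfl⟩)
  set c : (Fin q → Fin n) → R :=
    fun ι => φ (Submodule.Quotient.mk (PiTensorProduct.tprod R (dgen ∘ ι))) with hc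
  set μ : (⨂[R]^q (Ω[R⁄k])) →ₗ[R] R := φ.comp (symRel R (Ω[R⁄k]) q).mkQ with hμ
  have hμc : ∀ ι : Fin q → Fin n, μ (PiTensorProduct.tprod R (dgen ∘ ι)) = c ι := fun ι => rfl
  have h1mem : (1 : R) ∈ Submodule.span R (Set.range c) := by
    obtain ⟨z, hz⟩ := hφ 1
    obtain ⟨z', rfl⟩ := Submodule.Quotient.mk_surjective _ z
    have hz' : z' ∈ Submodule.span R
        {x : ⨂[R]^q (Ω[R⁄k]) | ∃ ι : Fin q → Fin n, x = PiTensorProduct.tprod R (dgen ∘ ι)} := by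
      rw [span_tprod_gen dgen hspan q]; trivial
    have hmem : μ z' ∈ Submodule.map μ (Submodule.span R
        {x : ⨂[R]^q (Ω[R⁄k]) | ∃ ι : Fin q → Fin n, x = PiTensorProduct.tprod R (dgen ∘ ι)}) :=
      Submodule.mem_map_of_mem hz'
    rw [Submodule.map_span] at hmem
    have hsub : μ '' {x : ⨂[R]^q (Ω[R⁄k]) | ∃ ι : Fin q → Fin n, x = PiTensorProduct.tprod R (dgen ∘ ι)}
        ⊆ Set.range c := by
      rintro _ ⟨x, ⟨ι, rfl⟩, rfl⟩
      exact ⟨ι, rfl⟩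
    have h1 : μ z' = 1 := hz
    rw [h1] at hmem
    exact Submodule.span_mono hsub hmem
  have hexι : ∃ ι₀ : Fin q → Fin n, ε (c ι₀) ≠ 0 := by
    by_contra h0
    push_neg at h0
    have hzero : ∀ x ∈ Submodule.span R (Set.range c), ε x = 0 := by
      intro x hx
      induction hx using Submodule.span_induction with
      | mem x hx => obtain ⟨ι, rfl⟩ := hx; exact h0 ι
      | zero => simp
      | add x y _ _ hx hy => rw [map_add, hx, hy, add_zero]
      | smul r x _ hx => rw [smul_eq_mul, _root_.map_mul, hx, mul_zero]
    have h1' := hzero 1 h1mem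
    rw [_root_.map_one ε] at h1'
    exact one_ne_zero h1'
  obtain ⟨ι₀, hι₀⟩ := hexι
  set z0 : Fin q := ⟨0, hq⟩ with hz0
  set b : Fin n → k := fun j => ε (c (Function.update ι₀ z0 j)) with hb
  have hb0 : b (ι₀ z0) ≠ 0 := by
    rw [hb]
    simpa [Function.update_eq_self] using hι₀
  -- the basic relation coming from the Jacobian
  have hrel : ∀ m : Fin s,
      ∑ j : Fin n, π (MvPolynomial.pderiv j (f m)) * c (Function.update ι₀ z0 j) = 0 := by
    intro m
    set L : (Ω[R⁄k]) →ₗ[R] R :=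
      μ.comp ((PiTensorProduct.tprod R (s := fun _ : Fin q => (Ω[R⁄k]))).toLinearMap (dgen ∘ ι₀) z0) with hL
    have hLd : ∀ jj : Fin n, L (dgen jj) = c (Function.update ι₀ z0 jj) := by
      intro jj
      show μ ((PiTensorProduct.tprod R) (Function.update (dgen ∘ ι₀) z0 (dgen jj)))
        = c (Function.update ι₀ z0 jj)
      have hupd : Function.update (dgen ∘ ι₀) z0 (dgen jj)
          = dgen ∘ (Function.update ι₀ z0 jj) := by
        funext i
        by_cases hi : i = z0
        · subst hi; simp
        · simp [Function.update_of_ne hi]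
      rw [hupd, hμc]
    calc ∑ j : Fin n, π (MvPolynomial.pderiv j (f m)) * c (Function.update ι₀ z0 j)
        = ∑ j : Fin n, π (MvPolynomial.pderiv j (f m)) • L (dgen j) := by
          refine Finset.sum_congr rfl fun j _ => ?_
          rw [hLd, smul_eq_mul]
      _ = L (∑ j : Fin n, π (MvPolynomial.pderiv j (f m)) • dgen j) := by
          rw [map_sum]
          refine Finset.sum_congr rfl fun j _ => ?_
          rw [LinearMap.map_smul]
      _ = L (KaehlerDifferential.D k R (π (f m))) := by rw [hkey]
      _ = 0 := by rw [hπf m, map_zero, map_zero]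
  -- extract the degree-zero part of the relation
  have hbrel : ∀ m : Fin s,
      ∑ j : Fin n, algebraMap k R (b j) * π (MvPolynomial.pderiv j (f m)) = 0 := by
    intro m
    have h4 : (0 : Polynomial R) = Polynomial.X ^ (d m - 1) *
        ∑ j : Fin n, Polynomial.C (π (MvPolynomial.pderiv j (f m)))
          * σA (c (Function.update ι₀ z0 j)) := by
      have h5 := congrArg σA (hrel m)
      rw [map_sum, map_zero] at h5
      rw [Finset.mul_sum, ← h5]
      refine Finset.sum_congr rfl fun j _ => ?_
      rw [_root_.map_mul, hσπ, hτhom _ (d m - 1) (isHomog_pderiv (hhom m) j)]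
      ring
    have h6 : ∑ j : Fin n, Polynomial.C (π (MvPolynomial.pderiv j (f m)))
        * σA (c (Function.update ι₀ z0 j)) = 0 := by
      apply Polynomial.ext
      intro N
      have h7 := congrArg (fun pp => Polynomial.coeff pp (N + (d m - 1))) h4
      simpa [Polynomial.coeff_X_pow_mul] using h7.symm
    have h8 := congrArg ev0 h6
    rw [map_sum, map_zero] at h8
    rw [← h8]
    refine Finset.sum_congr rfl fun j _ => ?_
    rw [_root_.map_mul, hev0σ, hev0C]
    rw [hb]
    ring
  -- the derivation on R given by the constant vector field b
  set d₀ : MvPolynomial (Fin n) k →ₗ[k] R :=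
    ∑ j : Fin n, b j • (π.toLinearMap.comp (MvPolynomial.pderiv j).toLinearMap) with hd₀def
  have hd₀ : ∀ p, d₀ p = ∑ j : Fin n, b j • π (MvPolynomial.pderiv j p) := by
    intro p
    rw [hd₀def]
    simp [LinearMap.sum_apply, LinearMap.smul_apply, LinearMap.comp_apply]
  have hd₀smul : ∀ (x : k) (y : R), x • y = algebraMap k R x * y := fun x y => Algebra.smul_def x y
  have hd₀I : ∀ a ∈ I, d₀ a = 0 := by
    intro a ha
    rw [hI] at ha
    have hgoal : π a = 0 ∧ d₀ a = 0 := by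
      induction ha using Submodule.span_induction with
      | mem x hx =>
          obtain ⟨m, rfl⟩ := hx
          refine ⟨hπf m, ?_⟩
          rw [hd₀]
          rw [← hbrel m]
          refine Finset.sum_congr rfl fun j _ => ?_
          rw [hd₀smul]
      | zero => exact ⟨map_zero _, map_zero _⟩
      | add x y _ _ hx hy =>
          exact ⟨by rw [map_add, hx.1, hy.1, add_zero],
            by rw [map_add, hx.2, hy.2, add_zero]⟩
      | smul r x _ hx =>
          refine ⟨by rw [smul_eq_mul, _root_.map_mul, hx.1, mul_zero], ?_⟩
          rw [smul_eq_mul, hd₀]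
          have hpm : ∀ j : Fin n, π ((MvPolynomial.pderiv j) (r * x))
              = π (MvPolynomial.pderiv j r) * π x + π r * π (MvPolynomial.pderiv j x) := by
            intro j
            rw [MvPolynomial.pderiv_mul, map_add, _root_.map_mul, _root_.map_mul]
          simp only [hpm, hx.1, mul_zero, zero_add]
          have : ∑ j : Fin n, b j • (π r * π ((MvPolynomial.pderiv j) x))
              = π r * ∑ j : Fin n, b j • π ((MvPolynomial.pderiv j) x) := by
            rw [Finset.mul_sum]
            exact Finset.sum_congr rfl fun j _ => (mul_smul_comm _ _ _).symm
          rw [this, ← hd₀, hx.2, mul_zero]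
    exact hgoal.2
  have hkerle : (I.restrictScalars k : Submodule k (MvPolynomial (Fin n) k))
      ≤ LinearMap.ker d₀ := fun a ha => hd₀I a ha
  set d₁ : (MvPolynomial (Fin n) k ⧸ I) →ₗ[k] R :=
    (Submodule.liftQ (I.restrictScalars k) d₀ hkerle).comp
      (Submodule.Quotient.restrictScalarsEquiv k (I : Submodule (MvPolynomial (Fin n) k)
        (MvPolynomial (Fin n) k))).symm.toLinearMap with hd₁def
  have hd₁ : ∀ p, d₁ (Ideal.Quotient.mk I p) = d₀ p := by
    intro p
    rw [hd₁def]
    simp only [LinearMap.comp_apply, LinearEquiv.coe_coe]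
    have hq1 : (Submodule.Quotient.restrictScalarsEquiv k (I : Submodule (MvPolynomial (Fin n) k)
        (MvPolynomial (Fin n) k))).symm (Ideal.Quotient.mk I p)
        = Submodule.Quotient.mk p := by
      rw [LinearEquiv.symm_apply_eq]
      rfl
    rw [hq1, Submodule.liftQ_apply]
  set dR : R →ₗ[k] R := d₁.comp e.symm.toLinearMap with hdRdef
  have hdR : ∀ p, dR (π p) = d₀ p := by
    intro p
    rw [hdRdef]
    simp only [LinearMap.comp_apply, AlgEquiv.toLinearMap_apply]
    have : e.symm (π p) = Ideal.Quotient.mk I p := by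
      simp [hπ, Ideal.Quotient.mkₐ_eq_mk]
    rw [this, hd₁]
  have hdRmul : ∀ a b' : R, dR (a * b') = a • dR b' + b' • dR a := by
    intro a b'
    obtain ⟨p, rfl⟩ := hπs a
    obtain ⟨p', rfl⟩ := hπs b'
    rw [← _root_.map_mul, hdR, hdR, hdR, hd₀, hd₀, hd₀]
    have hpm : ∀ j : Fin n, π ((MvPolynomial.pderiv j) (p * p'))
        = π (MvPolynomial.pderiv j p) * π p' + π p * π (MvPolynomial.pderiv j p') := by
      intro j
      rw [MvPolynomial.pderiv_mul, map_add, _root_.map_mul, _root_.map_mul]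
    simp only [hpm, smul_add]
    rw [Finset.smul_sum, Finset.smul_sum, ← Finset.sum_add_distrib]
    refine Finset.sum_congr rfl fun j _ => ?_
    simp only [Algebra.smul_def, smul_eq_mul, Algebra.algebraMap_self_apply]
    ring
  set Drv : Derivation k R R :=
    { toLinearMap := dR
      map_one_eq_zero' := by
        rw [show (1 : R) = π 1 from (_root_.map_one π).symm, hdR, hd₀]
        simp [MvPolynomial.pderiv_one]
      leibniz' := hdRmul } with hDrv
  refine ⟨Drv.liftKaehlerDifferential, ?_⟩
  have hψ : Drv.liftKaehlerDifferential (dgen (ι₀ z0)) = algebraMap k R (b (ι₀ z0)) := by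
    rw [hdgen]
    rw [Derivation.liftKaehlerDifferential_comp_D]
    show dR (π (MvPolynomial.X (ι₀ z0))) = _
    rw [hdR, hd₀]
    rw [Finset.sum_eq_single (ι₀ z0)]
    · rw [MvPolynomial.pderiv_X_self, _root_.map_one, Algebra.smul_def, mul_one]
    · intro j _ hj
      rw [MvPolynomial.pderiv_X_of_ne (Ne.symm hj), map_zero, smul_zero]
    · intro hmem
      exact absurd (Finset.mem_univ _) hmem
  intro r
  refine ⟨(r * algebraMap k R (b (ι₀ z0))⁻¹) • dgen (ι₀ z0), ?_⟩
  rw [LinearMap.map_smul, hψ, smul_eq_mul, mul_assoc, ← _root_.map_mul, inv_mul_cancel₀ hb0,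
    _root_.map_one, mul_one]
end

section
/- Let k be a field and R = k[x_1,...,x_n]/(f_1,...,f_s) with f_1,...,f_s polynomials. Then there exists a surjective R-module homomorphism Ω_{R/k} → R if and only if some column of the Jacobian matrix (∂f_i/∂x_j), viewed with entries in R, is an R-linear combination of the other columns, where additionally the coefficients together with −1 generate the unit ideal (equivalently, for graded R with homogeneous coefficients, literally one column is an R-combination of the others). -/
variable {k : Type*} [Field k] {n s : ℕ}

open MvPolynomial

/-- Chain rule: any `k`-derivation composed with a polynomial evaluation. -/
lemma key_chain {R : Type*} [CommRing R] [Algebra k R] {M : Type*} [AddCommGroup M]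
    [Module R M] [Module k M] [IsScalarTower k R M]
    (π : MvPolynomial (Fin n) k →ₐ[k] R) (D : Derivation k R M)
    (p : MvPolynomial (Fin n) k) :
    D (π p) = ∑ j : Fin n, π (pderiv j p) • D (π (X j)) := by
  induction p using MvPolynomial.induction_on with
  | C a =>
      simp [AlgHom.commutes]
  | add p q hp hq =>
      simp [map_add, hp, hq, Finset.sum_add_distrib, add_smul]
  | mul_X p i hp =>
      rw [map_mul, Derivation.leibniz, hp]
      have : ∀ j : Fin n, π (pderiv j (p * X i)) • D (π (X j)) =
          (π (X i) • (π (pderiv j p) • D (π (X j)))) +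
          (if j = i then π p • D (π (X i)) else 0) := by
        intro j
        rw [Derivation.leibniz, map_add, add_smul, add_comm]
        congr 1
        · rw [smul_eq_mul, map_mul, mul_smul]
        · by_cases h : j = i
          · subst h; simp [smul_eq_mul, map_mul]
          · simp [smul_eq_mul, h]
      rw [Finset.sum_congr rfl (fun j _ => this j), Finset.sum_add_distrib, ← Finset.smul_sum]
      simp [add_comm]

/-- For `R = k[x₁,…,xₙ]/(f₁,…,f_s)`, there is a surjection
`Ω_{R/k} ↠ R` iff there is a relation `u` among the columns of the Jacobian
matrix (i.e. `Σⱼ uⱼ ∂fᵢ/∂xⱼ = 0` in `R` for all `i`) whose coefficients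
generate the unit ideal — equivalently (as when one coefficient is `−1`), some
column of the Jacobian matrix is an `R`-linear combination of the others. -/
theorem stmt4 (f : Fin s → MvPolynomial (Fin n) k)
    (R : Type*) [CommRing R] [Algebra k R]
    (e : (MvPolynomial (Fin n) k ⧸ Ideal.span (Set.range f)) ≃ₐ[k] R) :
    (∃ φ : Ω[R⁄k] →ₗ[R] R, Function.Surjective φ) ↔
      (∃ u : Fin n → R,
        (∀ i : Fin s, ∑ j : Fin n,
          u j * e (Ideal.Quotient.mk _ (MvPolynomial.pderiv j (f i))) = 0) ∧
        Ideal.span (Set.range u) = ⊤) := by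
  let I : Ideal (MvPolynomial (Fin n) k) := Ideal.span (Set.range f)
  let π : MvPolynomial (Fin n) k →ₐ[k] R :=
    (e : (MvPolynomial (Fin n) k ⧸ I) →ₐ[k] R).comp (Ideal.Quotient.mkₐ k I)
  have hπdef : ∀ p, π p = e (Ideal.Quotient.mk I p) := fun p => rfl
  have hπ : Function.Surjective π :=
    e.surjective.comp Ideal.Quotient.mk_surjective
  have hπI : ∀ g ∈ I, π g = 0 := by
    intro g hg
    rw [hπdef, Ideal.Quotient.eq_zero_iff_mem.2 hg, map_zero]
  constructor
  · rintro ⟨φ, hφ⟩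
    let D : Derivation k R R := φ.compDer (KaehlerDifferential.D k R)
    refine ⟨fun j => D (π (MvPolynomial.X j)), ?_, ?_⟩
    · intro i
      have h0 : π (f i) = 0 := hπI _ (Ideal.subset_span ⟨i, rfl⟩)
      have hk := key_chain π D (f i)
      rw [h0, map_zero] at hk
      show ∑ j : Fin n,
          D (π (MvPolynomial.X j)) * e (Ideal.Quotient.mk I (MvPolynomial.pderiv j (f i))) = 0
      rw [show ∑ j : Fin n,
          D (π (MvPolynomial.X j)) * e (Ideal.Quotient.mk I (MvPolynomial.pderiv j (f i))) =
          ∑ j : Fin n, π (MvPolynomial.pderiv j (f i)) • D (π (MvPolynomial.X j)) from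
        Finset.sum_congr rfl fun j _ => by rw [smul_eq_mul, mul_comm]; rfl]
      exact hk.symm
    · rw [Ideal.eq_top_iff_one]
      obtain ⟨ω, hω⟩ := hφ 1
      have hmem : ∀ x (hx : x ∈ Submodule.span R (Set.range (KaehlerDifferential.D k R))),
          φ x ∈ Ideal.span (Set.range fun j => D (π (MvPolynomial.X j))) := by
        intro x hx
        induction hx using Submodule.span_induction with
        | mem x h =>
            obtain ⟨r, rfl⟩ := h
            obtain ⟨p, rfl⟩ := hπ r
            have h1 : φ (KaehlerDifferential.D k R (π p)) = D (π p) := rfl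
            rw [h1, key_chain π D p]
            exact Ideal.sum_mem _ fun j _ => by
              rw [smul_eq_mul]
              exact Ideal.mul_mem_left _ _ (Ideal.subset_span ⟨j, rfl⟩)
        | zero => simp
        | add x y hx hy ihx ihy => rw [map_add]; exact Ideal.add_mem _ ihx ihy
        | smul a x hx ih =>
            rw [map_smul, smul_eq_mul]; exact Ideal.mul_mem_left _ _ ih
      have h2 := hmem ω (by rw [KaehlerDifferential.span_range_derivation]; trivial)
      rwa [hω] at h2
  · rintro ⟨u, hu, hspan⟩
    have hu' : ∀ i : Fin s, ∑ j : Fin n, u j * π (MvPolynomial.pderiv j (f i)) = 0 :=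
      fun i => hu i
    let D₀ : MvPolynomial (Fin n) k →ₗ[k] R :=
      { toFun := fun p => ∑ j : Fin n, u j * π (MvPolynomial.pderiv j p)
        map_add' := by intro p q; simp [map_add, mul_add, Finset.sum_add_distrib]
        map_smul' := by
          intro c p
          simp only [Derivation.map_smul, map_smul, mul_smul_comm, RingHom.id_apply,
            ← Finset.smul_sum] }
    have hD0 : ∀ p q, D₀ (p * q) = π p * D₀ q + π q * D₀ p := by
      intro p q
      simp only [D₀, LinearMap.coe_mk, AddHom.coe_mk, Derivation.leibniz, smul_eq_mul,
        map_add, map_mul, mul_add, Finset.sum_add_distrib, Finset.mul_sum]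
      congr 1 <;> refine Finset.sum_congr rfl fun j _ => by ring
    have hker : ∀ g ∈ I, D₀ g = 0 := by
      intro g hg
      induction hg using Submodule.span_induction with
      | mem x h => obtain ⟨i, rfl⟩ := h; exact hu' i
      | zero => simp
      | add x y hx hy ihx ihy => rw [map_add, ihx, ihy, add_zero]
      | smul a x hx ih =>
          rw [smul_eq_mul, hD0, ih, mul_zero, hπI x hx, zero_mul, add_zero]
    let L : (MvPolynomial (Fin n) k ⧸ I) →ₗ[k] R :=
      (Submodule.liftQ (I.restrictScalars k) D₀ (fun x hx => hker x hx)).comp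
        (Submodule.Quotient.restrictScalarsEquiv k I).symm.toLinearMap
    have hL : ∀ p, L (Ideal.Quotient.mk I p) = D₀ p := by
      intro p
      rw [← Ideal.Quotient.mk_eq_mk]
      simp only [L, LinearMap.comp_apply, LinearEquiv.coe_coe,
        Submodule.Quotient.restrictScalarsEquiv_symm_mk, Submodule.liftQ_apply]
      rfl
    let Dlin : R →ₗ[k] R := L.comp e.symm.toLinearMap
    have hD : ∀ p, Dlin (π p) = D₀ p := by
      intro p
      show L (e.symm (e (Ideal.Quotient.mk I p))) = D₀ p
      rw [e.symm_apply_apply, hL]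
    let DR : Derivation k R R :=
      { toLinearMap := Dlin
        map_one_eq_zero' := by
          have h1 : Dlin (π 1) = D₀ 1 := hD 1
          rw [map_one] at h1
          rw [h1]
          simp [D₀]
        leibniz' := by
          intro a b
          obtain ⟨p, rfl⟩ := hπ a
          obtain ⟨q, rfl⟩ := hπ b
          show Dlin (π p * π q) = π p • Dlin (π q) + π q • Dlin (π p)
          rw [← map_mul, hD, hD0, hD, hD, smul_eq_mul, smul_eq_mul] }
    have hDX : ∀ j : Fin n, DR (π (MvPolynomial.X j)) = u j := by
      intro j
      show Dlin (π (MvPolynomial.X j)) = u j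
      rw [hD]
      show ∑ i : Fin n, u i * π (MvPolynomial.pderiv i (MvPolynomial.X j)) = u j
      classical
      rw [Finset.sum_eq_single j (fun i _ hij => by
          rw [MvPolynomial.pderiv_X_of_ne (Ne.symm hij), map_zero, mul_zero])
        (fun h => absurd (Finset.mem_univ j) h)]
      rw [MvPolynomial.pderiv_X_self, map_one, mul_one]
    refine ⟨DR.liftKaehlerDifferential, ?_⟩
    have h1 : (1 : R) ∈ Submodule.span R (Set.range u) := by
      show (1 : R) ∈ Ideal.span (Set.range u)
      rw [hspan]; trivial
    rw [Submodule.mem_span_range_iff_exists_fun] at h1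
    obtain ⟨c, hc⟩ := h1
    intro r
    refine ⟨r • ∑ j : Fin n, c j • KaehlerDifferential.D k R (π (MvPolynomial.X j)), ?_⟩
    rw [map_smul, map_sum]
    have : ∀ j : Fin n, DR.liftKaehlerDifferential
        (c j • KaehlerDifferential.D k R (π (MvPolynomial.X j))) = c j • u j := by
      intro j
      rw [map_smul, Derivation.liftKaehlerDifferential_comp_D, hDX]
    rw [Finset.sum_congr rfl fun j _ => this j, hc, smul_eq_mul, mul_one]
end

section
/- Let k be a field, n ≥ 4, f ∈ k[x_1,...,x_n] homogeneous of degree d ≥ 2 with d invertible in k, such that R = k[x_1,...,x_n]/(f) is a domain with an isolated singularity at the origin. Then for every q ≥ 1 there is no surjective R-module homomorphism from Sym^q_R(Ω_{R/k}) onto R, i.e. the free rank of every symmetric power of the Kähler differentials is zero. -/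
open scoped TensorProduct
open MvPolynomial

namespace Stmt7Aux

variable {R : Type*} [CommRing R] {σ : Type*}

lemma degree_add (a b : σ →₀ ℕ) : (a + b).degree = a.degree + b.degree := by
  classical
  simp [Finsupp.degree_eq_weight_one, map_add]

lemma comp_mul_right {h : MvPolynomial σ R} {e : ℕ} (hh : h.IsHomogeneous e)
    (c : MvPolynomial σ R) (b : ℕ) :
    homogeneousComponent (b + e) (c * h) = homogeneousComponent b c * h := by
  classical
  ext u
  rw [coeff_homogeneousComponent, coeff_mul, coeff_mul]
  simp_rw [coeff_homogeneousComponent]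
  by_cases hu : u.degree = b + e
  · rw [if_pos hu]
    apply Finset.sum_congr rfl
    rintro ⟨v, w⟩ hvw
    rw [Finset.HasAntidiagonal.mem_antidiagonal] at hvw
    by_cases hw : coeff w h = 0
    · rw [hw, mul_zero, mul_zero]
    · have hdw : w.degree = e := by
        by_contra hne; exact hw (hh.coeff_eq_zero hne)
      have hv : v.degree = b := by
        have h2 : v.degree + w.degree = u.degree := by rw [← hvw, degree_add]
        omega
      rw [if_pos hv]
  · rw [if_neg hu]
    symm
    apply Finset.sum_eq_zero
    rintro ⟨v, w⟩ hvw
    rw [Finset.HasAntidiagonal.mem_antidiagonal] at hvw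
    by_cases hw : coeff w h = 0
    · rw [hw, mul_zero]
    · have hdw : w.degree = e := by
        by_contra hne; exact hw (hh.coeff_eq_zero hne)
      have hv : v.degree ≠ b := by
        intro hv
        exact hu (by rw [← hvw, degree_add, hv, hdw])
      rw [if_neg hv, zero_mul]

lemma comp_mul_right_lt {h : MvPolynomial σ R} {e : ℕ} (hh : h.IsHomogeneous e)
    (c : MvPolynomial σ R) {j : ℕ} (hj : j < e) :
    homogeneousComponent j (c * h) = 0 := by
  classical
  ext u
  rw [coeff_homogeneousComponent, coeff_zero]
  split_ifs with hu
  · rw [coeff_mul]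
    apply Finset.sum_eq_zero
    rintro ⟨v, w⟩ hvw
    rw [Finset.HasAntidiagonal.mem_antidiagonal] at hvw
    by_cases hw : coeff w h = 0
    · rw [hw, mul_zero]
    · have hdw : w.degree = e := by
        by_contra hne; exact hw (hh.coeff_eq_zero hne)
      have h2 : v.degree + w.degree = u.degree := by rw [← hvw, degree_add]
      omega
  · rfl

lemma single_add_sub {u : σ →₀ ℕ} {i : σ} {N : ℕ} (h : N ≤ u i) :
    Finsupp.single i N + (u - Finsupp.single i N) = u := by
  classical
  ext j
  by_cases hj : j = i
  · subst hj
    simp only [Finsupp.add_apply, Finsupp.single_eq_same, Finsupp.tsub_apply]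
    omega
  · simp only [Finsupp.add_apply, Finsupp.tsub_apply,
      Finsupp.single_eq_of_ne' (Ne.symm hj)]
    omega

lemma X_mul_pderiv_monomial (i : σ) (u : σ →₀ ℕ) (c : R) :
    X i * pderiv i (monomial u c) = (u i) • monomial u c := by
  classical
  rw [pderiv_monomial]
  by_cases h : u i = 0
  · simp [h]
  · rw [X, monomial_mul, one_mul, single_add_sub (by omega : 1 ≤ u i), smul_monomial,
      nsmul_eq_mul, mul_comm]

lemma degree_single (i : σ) (N : ℕ) : (Finsupp.single i N).degree = N := by
  classical
  rcases eq_or_ne N 0 with h | h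
  · simp [h, Finsupp.degree]
  · exact Finsupp.degree_single i N

lemma pderiv_isHomogeneous {f : MvPolynomial σ R} {d : ℕ} (hf : f.IsHomogeneous d) (i : σ) :
    (pderiv i f).IsHomogeneous (d - 1) := by
  classical
  rw [f.as_sum, map_sum]
  apply IsHomogeneous.sum
  intro u hu
  rw [pderiv_monomial]
  by_cases h : u i = 0
  · rw [h]; rw [Nat.cast_zero, mul_zero, monomial_zero]; exact isHomogeneous_zero _ _ _
  · apply isHomogeneous_monomial
    have h1 : Finsupp.single i 1 + (u - Finsupp.single i 1) = u := single_add_sub (by omega)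
    have h2 : u.degree = d := by
      rw [Finsupp.degree_eq_weight_one]; exact hf (mem_support_iff.mp hu)
    have h3 := degree_add (Finsupp.single i 1) (u - Finsupp.single i 1)
    rw [h1, degree_single] at h3
    omega

lemma sum_eq_degree (u : σ →₀ ℕ) {n : ℕ} [Fintype σ] :
    ∑ i : σ, u i = u.degree := by
  classical
  rw [Finsupp.degree]
  exact (Finset.sum_subset (Finset.subset_univ _)
    (fun x _ hx => Finsupp.notMem_support_iff.mp hx)).symm

lemma euler {n : ℕ} {f : MvPolynomial (Fin n) R} {d : ℕ} (hf : f.IsHomogeneous d) :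
    ∑ i : Fin n, X i * pderiv i f = d • f := by
  classical
  conv_lhs => rw [f.as_sum]
  conv_rhs => rw [f.as_sum]
  rw [Finset.smul_sum]
  have : ∀ i : Fin n, X i * pderiv i (∑ u ∈ f.support, monomial u (coeff u f))
      = ∑ u ∈ f.support, X i * pderiv i (monomial u (coeff u f)) := by
    intro i; rw [map_sum, Finset.mul_sum]
  simp_rw [this]
  rw [Finset.sum_comm]
  apply Finset.sum_congr rfl
  intro u hu
  simp_rw [X_mul_pderiv_monomial]
  rw [← Finset.sum_smul]
  congr 1
  rw [sum_eq_degree]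
  · rw [Finsupp.degree_eq_weight_one]; exact hf (mem_support_iff.mp hu)
  · exact d

lemma mem_homog_comp_eq {j : ℕ} {p : MvPolynomial σ R} (hp : p.IsHomogeneous j) :
    homogeneousComponent j p = p := by
  classical
  ext u
  rw [coeff_homogeneousComponent]
  split_ifs with hu
  · rfl
  · exact (hp.coeff_eq_zero hu).symm

section Dim

variable {k : Type*} [Field k]

lemma degree_eq_sum_id (d : σ →₀ ℕ) : d.degree = d.sum fun _ => id := rfl

/-- monomial exponents of fixed degree are equivalent to `Sym`. -/
noncomputable def degreeEquivSym (n j : ℕ) :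
    {d : Fin n →₀ ℕ // d.degree = j} ≃ Sym (Fin n) j where
  toFun d := ⟨Finsupp.toMultiset d.1, by
    rw [Finsupp.card_toMultiset, ← degree_eq_sum_id, d.2]⟩
  invFun s := ⟨Multiset.toFinsupp (s : Multiset (Fin n)), by
    rw [degree_eq_sum_id, Multiset.toFinsupp_sum_eq]
    exact s.2⟩
  left_inv d := by
    ext1
    simp
  right_inv s := by
    ext1
    simp

noncomputable instance degFintype (n j : ℕ) : Fintype {d : Fin n →₀ ℕ // d.degree = j} :=
  Fintype.ofEquiv _ (degreeEquivSym n j).symm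

lemma card_deg_eq (n j : ℕ) :
    Fintype.card {d : Fin n →₀ ℕ // d.degree = j} = Nat.multichoose n j := by
  rw [Fintype.card_congr (degreeEquivSym n j), Sym.card_sym_eq_multichoose,
    Fintype.card_fin]

instance homogFD (n j : ℕ) :
    FiniteDimensional k (homogeneousSubmodule (Fin n) k j) := by
  apply Submodule.finiteDimensional_of_le (S₂ := restrictTotalDegree (Fin n) k j)
  intro p hp
  rw [mem_restrictTotalDegree]
  exact (mem_homogeneousSubmodule _ _).mp hp |>.totalDegree_le

lemma finrank_homog (n j : ℕ) :
    Module.finrank k (homogeneousSubmodule (Fin n) k j) = Nat.multichoose n j := by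
  classical
  have h1 : homogeneousSubmodule (Fin n) k j
      = restrictSupport k {d | d.degree = j} := by
    rw [homogeneousSubmodule_eq_finsupp_supported]
    rfl
  rw [← card_deg_eq n j]
  haveI : Fintype ↑{d : Fin n →₀ ℕ | d.degree = j} := degFintype n j
  have hb := Module.finrank_eq_card_basis
    (R := k) (basisRestrictSupport k {d : Fin n →₀ ℕ | d.degree = j})
  rw [h1, hb]
  exact Fintype.card_congr (Equiv.refl _)

end Dim

section FrStep

variable {k : Type*} [Field k] {V : Type*} [AddCommGroup V] [Module k V]

open Module Submodule LinearMap

lemma finrank_comap_subtype (μ : V →ₗ[k] V) (p : Submodule k V) :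
    finrank k (comap p.subtype (ker μ)) = finrank k ↥(ker μ ⊓ p) := by
  have h1 : comap p.subtype (ker μ) = comap p.subtype (ker μ ⊓ p) := by
    rw [comap_inf, comap_subtype_self, inf_top_eq]
  rw [h1]
  exact (Submodule.comapSubtypeEquivOfLe inf_le_right).finrank_eq

lemma fr_step (μ : V →ₗ[k] V) (A A' B C : Submodule k V)
    [FiniteDimensional k A] [FiniteDimensional k B] [FiniteDimensional k C]
    (hBC : B ≤ C) (hmap : Submodule.map μ B ≤ A) (hA' : A' ≤ A ⊔ Submodule.map μ C) :
    finrank k A' + finrank k B ≤ finrank k A + finrank k C := by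
  haveI : Module.Finite k (Submodule.map μ C) := Module.Finite.map C μ
  haveI : FiniteDimensional k ↥(A ⊔ Submodule.map μ C) := Submodule.finiteDimensional_sup _ _
  haveI : FiniteDimensional k A' := Submodule.finiteDimensional_of_le hA'
  have E1 := Submodule.finrank_sup_add_finrank_inf_eq A (Submodule.map μ C)
  have I1 : finrank k A' ≤ finrank k ↥(A ⊔ Submodule.map μ C) := Submodule.finrank_mono hA'
  have I2 : finrank k ↥(Submodule.map μ B) ≤ finrank k ↥(A ⊓ Submodule.map μ C) := by
    haveI : FiniteDimensional k ↥(A ⊓ Submodule.map μ C) :=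
      Submodule.finiteDimensional_of_le inf_le_left
    exact Submodule.finrank_mono (le_inf hmap (Submodule.map_mono hBC))
  have E2 : finrank k ↥(Submodule.map μ C) + finrank k ↥(ker (μ.domRestrict C)) =
      finrank k C := by
    have h := LinearMap.finrank_range_add_finrank_ker (μ.domRestrict C)
    rwa [LinearMap.range_domRestrict] at h
  have E3 : finrank k ↥(Submodule.map μ B) + finrank k ↥(ker (μ.domRestrict B)) =
      finrank k B := by
    have h := LinearMap.finrank_range_add_finrank_ker (μ.domRestrict B)
    rwa [LinearMap.range_domRestrict] at h
  have I3 : finrank k ↥(ker (μ.domRestrict B)) ≤ finrank k ↥(ker (μ.domRestrict C)) := by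
    rw [LinearMap.ker_domRestrict, LinearMap.ker_domRestrict,
      finrank_comap_subtype, finrank_comap_subtype]
    haveI : FiniteDimensional k ↥(ker μ ⊓ C) := Submodule.finiteDimensional_of_le inf_le_right
    exact Submodule.finrank_mono (inf_le_inf_left _ hBC)
  omega

end FrStep

section Count

variable {k : Type*} [Field k] {n m e : ℕ}

open Module Submodule

/-- truncated generating family -/
noncomputable def gen (h : Fin m → MvPolynomial (Fin n) k) (r : ℕ) : Fin m → MvPolynomial (Fin n) k :=
  fun i => if (i : ℕ) < r then h i else 0

/-- the ideal generated by the first `r` generators -/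
noncomputable def TT (h : Fin m → MvPolynomial (Fin n) k) (r : ℕ) : Ideal (MvPolynomial (Fin n) k) :=
  Ideal.span (Set.range (gen h r))

/-- the degree-`j` graded piece of `TT h r` -/
noncomputable def WW (h : Fin m → MvPolynomial (Fin n) k) (r j : ℕ) :
    Submodule k (MvPolynomial (Fin n) k) :=
  (Submodule.restrictScalars k (TT h r)) ⊓ homogeneousSubmodule (Fin n) k j

instance WWfd (h : Fin m → MvPolynomial (Fin n) k) (r j : ℕ) :
    FiniteDimensional k (WW h r j) :=
  Submodule.finiteDimensional_of_le inf_le_right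

lemma gen_mem_TT (h : Fin m → MvPolynomial (Fin n) k) (r : ℕ) (i : Fin m) :
    gen h r i ∈ TT h r :=
  Ideal.subset_span ⟨i, rfl⟩

lemma gen_isHomogeneous {h : Fin m → MvPolynomial (Fin n) k}
    (hh : ∀ i, (h i).IsHomogeneous e) (r : ℕ) (i : Fin m) :
    (gen h r i).IsHomogeneous e := by
  unfold gen
  split_ifs
  · exact hh i
  · exact isHomogeneous_zero _ _ _

lemma TT_mono (h : Fin m → MvPolynomial (Fin n) k) {r r' : ℕ} (hrr : r ≤ r') :
    TT h r ≤ TT h r' := by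
  rw [TT, Ideal.span_le]
  rintro x ⟨i, rfl⟩
  unfold gen
  split_ifs with hi
  · have : gen h r' i = h i := if_pos (lt_of_lt_of_le hi hrr)
    exact this ▸ gen_mem_TT h r' i
  · exact Ideal.zero_mem _

lemma WW_le_S (h : Fin m → MvPolynomial (Fin n) k) (r j : ℕ) :
    WW h r j ≤ homogeneousSubmodule (Fin n) k j := inf_le_right

/-- decomposition of a homogeneous element of the ideal -/
lemma mem_TT_decomp {h : Fin m → MvPolynomial (Fin n) k}
    (hh : ∀ i, (h i).IsHomogeneous e) {r j : ℕ} (hej : e ≤ j)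
    {x : MvPolynomial (Fin n) k} (hxT : x ∈ TT h r) (hxS : x.IsHomogeneous j) :
    ∃ c : Fin m → MvPolynomial (Fin n) k,
      x = ∑ i : Fin m, homogeneousComponent (j - e) (c i) * gen h r i := by
  obtain ⟨c, hc⟩ := Ideal.mem_span_range_iff_exists_fun.mp hxT
  refine ⟨c, ?_⟩
  have h1 : homogeneousComponent j x = x := mem_homog_comp_eq hxS
  have h2 : x = homogeneousComponent j (∑ i : Fin m, c i * gen h r i) := by rw [hc, h1]
  rw [h2, map_sum]
  apply Finset.sum_congr rfl
  intro i _
  have h4 := comp_mul_right (gen_isHomogeneous hh r i) (c i) (j - e)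
  rw [Nat.sub_add_cancel hej] at h4
  exact h4

lemma WW_eq_bot {h : Fin m → MvPolynomial (Fin n) k}
    (hh : ∀ i, (h i).IsHomogeneous e) {j : ℕ} (hje : j < e) (r : ℕ) :
    WW h r j = ⊥ := by
  rw [eq_bot_iff]
  rintro x ⟨hxT, hxS⟩
  obtain ⟨c, hc⟩ := Ideal.mem_span_range_iff_exists_fun.mp hxT
  have h1 : homogeneousComponent j x = x :=
    mem_homog_comp_eq ((mem_homogeneousSubmodule _ _).mp hxS)
  have h2 : x = homogeneousComponent j (∑ i : Fin m, c i * gen h r i) := by rw [hc, h1]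
  rw [map_sum] at h2
  have h3 : ∀ i : Fin m, i ∈ Finset.univ →
      homogeneousComponent j (c i * gen h r i) = 0 := fun i _ =>
    comp_mul_right_lt (gen_isHomogeneous hh r i) (c i) hje
  rw [Finset.sum_congr rfl h3, Finset.sum_const_zero] at h2
  simp [h2]

lemma step {h : Fin m → MvPolynomial (Fin n) k}
    (hh : ∀ i, (h i).IsHomogeneous e) (r j : ℕ) (hej : e ≤ j) :
    finrank k (WW h (r+1) j) + finrank k (WW h r (j - e))
      ≤ finrank k (WW h r j) + finrank k (homogeneousSubmodule (Fin n) k (j - e)) := by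
  rcases Nat.lt_or_ge r m with hrm | hrm
  swap
  · have hg : gen h (r+1) = gen h r := by
      funext i
      have hi := i.isLt
      unfold gen
      rw [if_pos (by omega), if_pos (by omega)]
    have hW : WW h (r+1) j = WW h r j := by unfold WW TT; rw [hg]
    rw [hW]
    have hfr : finrank k (WW h r (j - e))
        ≤ finrank k (homogeneousSubmodule (Fin n) k (j - e)) :=
      Submodule.finrank_mono (WW_le_S h r (j - e))
    omega
  · set ir : Fin m := ⟨r, hrm⟩ with hir_def
    set μ := LinearMap.mulLeft k (h ir) with hμ_def
    apply fr_step μ (WW h r j) (WW h (r+1) j) (WW h r (j - e))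
      (homogeneousSubmodule (Fin n) k (j - e)) (WW_le_S h r (j - e))
    · -- map μ (WW h r (j-e)) ≤ WW h r j
      rintro x hx
      obtain ⟨y, hy, rfl⟩ := hx
      obtain ⟨hyT, hyS⟩ := hy
      refine ⟨Ideal.mul_mem_left _ _ hyT, ?_⟩
      have := (hh ir).mul ((mem_homogeneousSubmodule _ _).mp hyS)
      rw [Nat.add_sub_cancel' hej] at this
      exact this
    · -- WW h (r+1) j ≤ WW h r j ⊔ map μ S(j-e)
      rintro x ⟨hxT, hxS⟩
      obtain ⟨c, hc⟩ := mem_TT_decomp hh hej hxT ((mem_homogeneousSubmodule _ _).mp hxS)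
      rw [hc, ← Finset.sum_erase_add _ _ (Finset.mem_univ ir)]
      apply Submodule.add_mem_sup
      · apply Submodule.sum_mem
        intro i hi
        have hine : (i : ℕ) ≠ r := by
          intro hcon
          exact (Finset.mem_erase.mp hi).1 (Fin.ext hcon)
        have hgi : gen h (r+1) i = gen h r i := by
          unfold gen
          rcases Nat.lt_or_ge (i : ℕ) r with h1 | h1
          · rw [if_pos (by omega), if_pos h1]
          · rw [if_neg (by omega), if_neg (by omega)]
        rw [hgi]
        refine ⟨Ideal.mul_mem_left _ _ (gen_mem_TT h r i), ?_⟩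
        have := (homogeneousComponent_isHomogeneous (j - e) (c i)).mul
          (gen_isHomogeneous hh r i)
        rw [Nat.sub_add_cancel hej] at this
        exact this
      · have hgir : gen h (r+1) ir = h ir := if_pos (by simp [hir_def])
        have hterm : homogeneousComponent (j - e) (c ir) * gen h (r+1) ir
            = μ (homogeneousComponent (j - e) (c ir)) := by
          rw [hgir, hμ_def, LinearMap.mulLeft_apply, mul_comm]
        rw [hterm]
        exact Submodule.mem_map_of_mem
          ((mem_homogeneousSubmodule _ _).mpr (homogeneousComponent_isHomogeneous (j - e) (c ir)))

variable (k) in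
/-- codimension of the graded piece of the ideal -/
noncomputable def AA (h : Fin m → MvPolynomial (Fin n) k) (r j : ℕ) : ℕ :=
  finrank k (homogeneousSubmodule (Fin n) k j) - finrank k (WW h r j)

lemma frW_le (h : Fin m → MvPolynomial (Fin n) k) (r j : ℕ) :
    finrank k (WW h r j) ≤ finrank k (homogeneousSubmodule (Fin n) k j) :=
  Submodule.finrank_mono (WW_le_S h r j)

lemma claim1 {h : Fin m → MvPolynomial (Fin n) k}
    (hh : ∀ i, (h i).IsHomogeneous e) (he : 1 ≤ e) (r : ℕ) : ∀ j,
    AA k h r j ≤ ∑ l ∈ Finset.range (j / e + 1), AA k h (r+1) (j - l * e) := by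
  intro j
  induction j using Nat.strong_induction_on with
  | _ j IH =>
  rcases Nat.lt_or_ge j e with hje | hje
  · have hd : j / e = 0 := Nat.div_eq_of_lt hje
    rw [hd, Finset.sum_range_one]
    have hz : j - 0 * e = j := by omega
    rw [hz]
    unfold AA
    rw [WW_eq_bot hh hje r, WW_eq_bot hh hje (r+1)]
  · have hstep := step hh r j hje
    have m1 := frW_le h r j
    have m2 := frW_le h (r+1) j
    have m3 := frW_le h r (j - e)
    have h1 : AA k h r j ≤ AA k h (r+1) j + AA k h r (j - e) := by
      unfold AA
      omega
    have h2 := IH (j - e) (by omega)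
    have h3 : ∀ l ∈ Finset.range ((j - e) / e + 1),
        AA k h (r+1) (j - e - l * e) = AA k h (r+1) (j - (l+1) * e) := by
      intro l _
      congr 1
      rw [Nat.sub_sub, Nat.succ_mul, Nat.add_comm (l*e)]
    rw [Finset.sum_congr rfl h3] at h2
    have hdiv : j / e = (j - e) / e + 1 := by
      rw [Nat.div_eq_sub_div (by omega) hje]
    calc AA k h r j ≤ AA k h (r+1) j + AA k h r (j - e) := h1
      _ ≤ AA k h (r+1) j + ∑ l ∈ Finset.range ((j - e) / e + 1),
            AA k h (r+1) (j - (l+1) * e) := by omega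
      _ = ∑ l ∈ Finset.range (j / e + 1), AA k h (r+1) (j - l * e) := by
          rw [hdiv]
          conv_rhs => rw [Finset.sum_range_succ']
          have hz2 : j - 0 * e = j := by omega
          rw [hz2]
          exact add_comm _ _

lemma claim2 {h : Fin m → MvPolynomial (Fin n) k}
    (hh : ∀ i, (h i).IsHomogeneous e) (he : 1 ≤ e) (r j : ℕ) :
    AA k h 0 j ≤ ∑ l ∈ Finset.range (j / e + 1), (l+1)^r * AA k h (r+1) (j - l * e) := by
  induction r with
  | zero => simpa using claim1 hh he 0 j
  | succ r IHr =>
    have hb : ∀ l ∈ Finset.range (j / e + 1),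
        (l+1)^r * AA k h (r+1) (j - l * e)
          ≤ (l+1)^r * ∑ t ∈ Finset.range ((j - l * e) / e + 1),
              AA k h (r+2) (j - l * e - t * e) := fun l _ =>
      Nat.mul_le_mul_left _ (claim1 hh he (r+1) (j - l * e))
    have h1 := le_trans IHr (Finset.sum_le_sum hb)
    -- reorganize the double sum
    simp_rw [Finset.mul_sum] at h1
    rw [Finset.sum_sigma'] at h1
    set Sig := (Finset.range (j / e + 1)).sigma
      (fun l => Finset.range ((j - l * e) / e + 1)) with hSig
    have hmaps : ∀ x ∈ Sig, x.1 + x.2 ∈ Finset.range (j / e + 1) := by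
      rintro ⟨l, t⟩ hx
      simp only [hSig, Finset.mem_sigma, Finset.mem_range] at hx
      obtain ⟨hx1, hx2⟩ := hx
      simp only [Finset.mem_range]
      have hle : l * e ≤ j :=
        calc l * e ≤ (j / e) * e := Nat.mul_le_mul_right _ (by omega)
          _ ≤ j := Nat.div_mul_le_self j e
      have hte : t * e ≤ j - l * e :=
        calc t * e ≤ ((j - l * e) / e) * e := Nat.mul_le_mul_right _ (by omega)
          _ ≤ j - l * e := Nat.div_mul_le_self _ e
      have hlt : (l + t) * e ≤ j := by
        rw [Nat.add_mul]
        omega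
      have := (Nat.le_div_iff_mul_le (by omega : 0 < e)).mpr hlt
      omega
    refine le_trans h1 ?_
    rw [← Finset.sum_fiberwise_of_maps_to hmaps
      (fun x => (x.1+1)^r * AA k h (r+2) (j - x.1 * e - x.2 * e))]
    refine Finset.sum_le_sum ?_
    intro s hs
    -- inner fiber sum
    have hfib : ∀ x ∈ Sig.filter (fun x => x.1 + x.2 = s),
        (x.1+1)^r * AA k h (r+2) (j - x.1 * e - x.2 * e)
          = (x.1+1)^r * AA k h (r+2) (j - s * e) := by
      rintro ⟨l, t⟩ hx
      simp only [Finset.mem_filter] at hx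
      have hs' : j - l * e - t * e = j - s * e := by
        rw [Nat.sub_sub, ← Nat.add_mul, hx.2]
      simp only [hs']
    rw [Finset.sum_congr rfl hfib, ← Finset.sum_mul]
    apply Nat.mul_le_mul_right
    -- Σ over fiber of (l+1)^r ≤ (s+1)^(r+1)
    have himg : (∑ l ∈ (Sig.filter (fun x => x.1 + x.2 = s)).image
          (fun x : (_ : ℕ) × ℕ => x.1), (l+1)^r)
        = ∑ x ∈ Sig.filter (fun x => x.1 + x.2 = s), (x.1+1)^r := by
      apply Finset.sum_image
      rintro ⟨l, t⟩ hx ⟨l', t'⟩ hy hxy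
      simp only [Finset.mem_coe, Finset.mem_filter] at hx hy
      simp only at hxy
      subst hxy
      have : t = t' := by omega
      subst this
      rfl
    rw [← himg]
    have hsub : (Sig.filter (fun x => x.1 + x.2 = s)).image (fun x : (_ : ℕ) × ℕ => x.1)
        ⊆ Finset.range (s + 1) := by
      intro l hl
      simp only [Finset.mem_image, Finset.mem_filter] at hl
      obtain ⟨⟨l', t'⟩, hx, rfl⟩ := hl
      have hx2 := hx.2
      simp only at hx2
      simp only [Finset.mem_range]
      omega
    calc ∑ l ∈ (Sig.filter (fun x => x.1 + x.2 = s)).image (fun x : (_ : ℕ) × ℕ => x.1),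
          (l+1)^r
        ≤ ∑ l ∈ Finset.range (s + 1), (l+1)^r := Finset.sum_le_sum_of_subset hsub
      _ ≤ ∑ _l ∈ Finset.range (s + 1), (s+1)^r := by
          apply Finset.sum_le_sum
          intro l hl
          exact Nat.pow_le_pow_left (by rw [Finset.mem_range] at hl; omega) r
      _ = (s+1)^(r+1) := by
          rw [Finset.sum_const, Finset.card_range, smul_eq_mul, pow_succ, mul_comm]

lemma TT_top (h : Fin m → MvPolynomial (Fin n) k) :
    TT h m = Ideal.span (Set.range h) := by
  unfold TT
  have hg : gen h m = h := by
    funext i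
    exact if_pos i.isLt
  rw [hg]

lemma vanish {h : Fin m → MvPolynomial (Fin n) k} (hn : 0 < n) (N : Fin n → ℕ)
    (hN : ∀ i, X i ^ N i ∈ Ideal.span (Set.range h)) {j : ℕ} (hj : ∑ i, N i ≤ j)
    {p : MvPolynomial (Fin n) k} (hp : p.IsHomogeneous j) :
    p ∈ Ideal.span (Set.range h) := by
  rw [p.as_sum]
  apply Submodule.sum_mem
  intro u hu
  have hdeg : ∑ i, u i = j := by
    rw [sum_eq_degree (n := n), Finsupp.degree_eq_weight_one]
    exact hp (mem_support_iff.mp hu)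
  have hex : ∃ i, N i ≤ u i := by
    by_contra hcon
    push_neg at hcon
    have : ∑ i, u i < ∑ i, N i :=
      Finset.sum_lt_sum_of_nonempty (Finset.univ_nonempty_iff.mpr ⟨⟨0, hn⟩⟩)
        (fun i _ => hcon i)
    omega
  obtain ⟨i, hi⟩ := hex
  have hsplit : monomial u (coeff u p)
      = monomial (u - Finsupp.single i (N i)) (coeff u p) * X i ^ (N i) := by
    rw [X_pow_eq_monomial, monomial_mul, mul_one, add_comm, single_add_sub hi]
  rw [hsplit]
  exact Ideal.mul_mem_left _ _ (hN i)

lemma pow_le_factorial_mul_choose (ν j : ℕ) :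
    (j+1)^ν ≤ ν.factorial * (j + ν).choose ν := by
  induction ν with
  | zero => simp
  | succ ν IH =>
    have hid := Nat.add_one_mul_choose_eq (j + ν) ν
    -- (j+ν+1) * C(j+ν, ν) = C(j+ν+1, ν+1) * (ν+1)
    have key : (ν+1).factorial * (j + (ν+1)).choose (ν+1)
        = (j + ν + 1) * (ν.factorial * (j + ν).choose ν) := by
      rw [Nat.factorial_succ]
      have harg : j + (ν + 1) = (j + ν) + 1 := by omega
      rw [harg]
      calc (ν + 1) * ν.factorial * ((j + ν) + 1).choose (ν + 1)
          = ν.factorial * (((j + ν) + 1).choose (ν + 1) * (ν + 1)) := by ring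
        _ = ν.factorial * ((j + ν + 1) * (j + ν).choose ν) := by
            rw [← Nat.add_one_mul_choose_eq]
        _ = (j + ν + 1) * (ν.factorial * (j + ν).choose ν) := by ring
    rw [key, pow_succ]
    calc (j+1)^ν * (j+1) ≤ (ν.factorial * (j + ν).choose ν) * (j + ν + 1) :=
          Nat.mul_le_mul IH (by omega)
      _ = (j + ν + 1) * (ν.factorial * (j + ν).choose ν) := by ring

lemma count (he : 1 ≤ e) (hmn : m + 1 ≤ n)
    (h : Fin m → MvPolynomial (Fin n) k) (hh : ∀ i, (h i).IsHomogeneous e)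
    (hX : ∀ i : Fin n, ∃ N : ℕ, X i ^ N ∈ Ideal.span (Set.range h)) : False := by
  have hn : 0 < n := by omega
  choose N hN using hX
  rcases Nat.eq_zero_or_pos m with hm0 | hm0
  · -- no generators at all
    have hempty : Ideal.span (Set.range h) = ⊥ := by
      rw [Ideal.span_eq_bot]
      rintro x ⟨i, rfl⟩
      exact absurd i.isLt (by omega)
    have h1 := hN ⟨0, hn⟩
    rw [hempty, Ideal.mem_bot] at h1
    exact pow_ne_zero _ (X_ne_zero _) h1
  -- now m ≥ 1
  set J := max (∑ i, N i) 1 with hJ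
  have hvan : ∀ j, J ≤ j → AA k h m j = 0 := by
    intro j hj
    have hSW : homogeneousSubmodule (Fin n) k j ≤ Submodule.restrictScalars k (TT h m) := by
      intro p hp
      rw [Submodule.restrictScalars_mem, TT_top]
      exact vanish hn N hN (by omega) ((mem_homogeneousSubmodule _ _).mp hp)
    have hW : WW h m j = homogeneousSubmodule (Fin n) k j :=
      le_antisymm inf_le_right (le_inf hSW le_rfl)
    unfold AA
    rw [hW]
    omega
  set Amax := (∑ j' ∈ Finset.range J, finrank k (homogeneousSubmodule (Fin n) k j')) + 1
    with hAmaxdef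
  have hAmax : ∀ j', AA k h m j' ≤ Amax := by
    intro j'
    rcases Nat.lt_or_ge j' J with hj' | hj'
    · have h1 : AA k h m j' ≤ finrank k (homogeneousSubmodule (Fin n) k j') := by
        unfold AA; omega
      have h2 : finrank k (homogeneousSubmodule (Fin n) k j')
          ≤ ∑ j'' ∈ Finset.range J, finrank k (homogeneousSubmodule (Fin n) k j'') :=
        Finset.single_le_sum (f := fun j'' => finrank k (homogeneousSubmodule (Fin n) k j''))
          (fun _ _ => Nat.zero_le _) (Finset.mem_range.mpr hj')
      omega
    · rw [hvan j' hj']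
      exact Nat.zero_le _
  set ν := n - 1 with hν
  have hνm : m ≤ ν := by omega
  have hν1 : 1 ≤ ν := by omega
  set Q := ν.factorial * ((J + 1) * Amax) with hQ
  set j := Q * e with hj
  have hje : j / e = Q := Nat.mul_div_cancel Q (by omega)
  have hclaim := claim2 hh he (m - 1) j
  rw [Nat.sub_add_cancel hm0] at hclaim
  -- LHS is the full dimension
  have hT0 : TT h 0 = ⊥ := by
    rw [TT, Ideal.span_eq_bot]
    rintro x ⟨i, rfl⟩
    exact if_neg (by omega)
  have hA0 : AA k h 0 j = finrank k (homogeneousSubmodule (Fin n) k j) := by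
    unfold AA WW
    rw [hT0]
    have : (Submodule.restrictScalars k (⊥ : Ideal (MvPolynomial (Fin n) k)))
        ⊓ homogeneousSubmodule (Fin n) k j = ⊥ := by
      rw [Submodule.restrictScalars_bot, bot_inf_eq]
    rw [this, finrank_bot]
    omega
  -- bound the right-hand side
  have hterm : ∀ l ∈ (Finset.range (j / e + 1)).filter
      (fun l => (l+1)^(m-1) * AA k h m (j - l * e) ≠ 0),
      (l+1)^(m-1) * AA k h m (j - l * e) ≤ (j / e + 1)^(m-1) * Amax := by
    intro l hl
    rw [Finset.mem_filter, Finset.mem_range] at hl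
    exact Nat.mul_le_mul (Nat.pow_le_pow_left (by omega) _) (hAmax _)
  have hsubset : (Finset.range (j / e + 1)).filter
      (fun l => (l+1)^(m-1) * AA k h m (j - l * e) ≠ 0)
      ⊆ (Finset.range (J + 1)).image (fun t => j / e - t) := by
    intro l hl
    rw [Finset.mem_filter, Finset.mem_range] at hl
    obtain ⟨hl1, hl2⟩ := hl
    have hA : AA k h m (j - l * e) ≠ 0 := by
      intro hc
      rw [hc, Nat.mul_zero] at hl2
      exact hl2 rfl
    have hjl : j - l * e < J := by
      by_contra hcon
      exact hA (hvan _ (by omega))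
    -- l ≥ j/e - J
    have hge : j / e ≤ l + J := by
      by_contra hcon
      push_neg at hcon
      have h5 : (l + J + 1) * e ≤ j := by
        calc (l + J + 1) * e ≤ (j / e) * e := Nat.mul_le_mul_right _ (by omega)
          _ ≤ j := Nat.div_mul_le_self j e
      have h6 : l * e + J * e + e ≤ j := by
        rw [show (l + J + 1) * e = l * e + J * e + e by ring] at h5
        exact h5
      have hJe : J ≤ J * e := Nat.le_mul_of_pos_right J (by omega)
      omega
    rw [Finset.mem_image]
    exact ⟨j / e - l, Finset.mem_range.mpr (by omega), by omega⟩
  have hRHS : ∑ l ∈ Finset.range (j / e + 1), (l+1)^(m-1) * AA k h m (j - l * e)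
      ≤ (J + 1) * ((j / e + 1)^(m-1) * Amax) := by
    rw [← Finset.sum_filter_ne_zero]
    calc ∑ l ∈ (Finset.range (j / e + 1)).filter
          (fun l => (l+1)^(m-1) * AA k h m (j - l * e) ≠ 0),
          (l+1)^(m-1) * AA k h m (j - l * e)
        ≤ ((Finset.range (j / e + 1)).filter
          (fun l => (l+1)^(m-1) * AA k h m (j - l * e) ≠ 0)).card
            * ((j / e + 1)^(m-1) * Amax) := by
          have := Finset.sum_le_card_nsmul _ _ _ hterm
          simpa [smul_eq_mul] using this
      _ ≤ (J + 1) * ((j / e + 1)^(m-1) * Amax) := by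
          apply Nat.mul_le_mul_right
          calc ((Finset.range (j / e + 1)).filter _).card
              ≤ ((Finset.range (J + 1)).image (fun t => j / e - t)).card :=
                Finset.card_le_card hsubset
            _ ≤ (Finset.range (J + 1)).card := Finset.card_image_le
            _ = J + 1 := Finset.card_range _
  -- lower bound on the dimension
  have hdim : (j+1)^ν ≤ ν.factorial * finrank k (homogeneousSubmodule (Fin n) k j) := by
    have h1 := pow_le_factorial_mul_choose ν j
    have h2 : finrank k (homogeneousSubmodule (Fin n) k j) = (j + ν).choose ν := by
      rw [finrank_homog n j, Nat.multichoose_eq]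
      have h3 : n + j - 1 = j + ν := by omega
      rw [h3]
      have h4 : (j + ν).choose ν = (j + ν).choose ((j + ν) - j) := by
        congr 1
        omega
      rw [h4, Nat.choose_symm (by omega)]
    rw [h2]
    exact h1
  -- combine
  have hfinal : (j+1)^ν ≤ Q * (j+1)^(ν-1) := by
    calc (j+1)^ν ≤ ν.factorial * finrank k (homogeneousSubmodule (Fin n) k j) := hdim
      _ = ν.factorial * AA k h 0 j := by rw [hA0]
      _ ≤ ν.factorial * ((J + 1) * ((j / e + 1)^(m-1) * Amax)) :=
          Nat.mul_le_mul_left _ (le_trans hclaim hRHS)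
      _ ≤ ν.factorial * ((J + 1) * ((j + 1)^(ν-1) * Amax)) := by
          apply Nat.mul_le_mul_left
          apply Nat.mul_le_mul_left
          apply Nat.mul_le_mul_right
          calc (j / e + 1)^(m-1) ≤ (j + 1)^(m-1) :=
                Nat.pow_le_pow_left (by
                  have := Nat.div_le_self j e
                  omega) _
            _ ≤ (j + 1)^(ν-1) := Nat.pow_le_pow_right (by omega) (by omega)
      _ = Q * (j+1)^(ν-1) := by rw [hQ]; ring
  have hpow : (j+1)^ν = (j+1) * (j+1)^(ν-1) := by
    conv_lhs => rw [show ν = (ν - 1) + 1 by omega]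
    rw [pow_succ]
    ring
  rw [hpow] at hfinal
  have hposp : 0 < (j+1)^(ν-1) := Nat.pow_pos (by omega)
  have hj1 : j + 1 ≤ Q := Nat.le_of_mul_le_mul_right (by
    calc (j+1) * (j+1)^(ν-1) ≤ Q * (j+1)^(ν-1) := hfinal) hposp
  have hjQ : Q ≤ j := by
    rw [hj]
    exact Nat.le_mul_of_pos_right Q (by omega)
  omega

end Count

section Indep

variable {k : Type*} [Field k] {n d : ℕ}

lemma indep (hn : 1 ≤ n) {f : MvPolynomial (Fin n) k} (hd : 2 ≤ d) (hdk : (d : k) ≠ 0)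
    (hhom : f.IsHomogeneous d)
    (hiso : (Ideal.span ({f} ∪ Set.range fun j => pderiv j f)).radical
      = Ideal.span (Set.range (X : Fin n → MvPolynomial (Fin n) k))) :
    LinearIndependent k (fun i : Fin n => pderiv i f) := by
  by_contra hcon
  obtain ⟨g, hg0, i0, hgi0⟩ := Fintype.not_linearIndependent_iff.mp hcon
  -- index the remaining partials by Fin (n-1)
  have hcard : Fintype.card {i : Fin n // i ≠ i0} = n - 1 := by
    have hc := Fintype.card_subtype_compl (fun i : Fin n => i = i0)
    rw [Fintype.card_subtype_eq, Fintype.card_fin] at hc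
    exact hc
  set E := Fintype.equivFinOfCardEq hcard with hE
  set h : Fin (n-1) → MvPolynomial (Fin n) k := fun t => pderiv (E.symm t : Fin n) f with hhdef
  have hhii : ∀ i : Fin n, i ≠ i0 → pderiv i f ∈ Ideal.span (Set.range h) := by
    intro i hi
    apply Ideal.subset_span
    exact ⟨E ⟨i, hi⟩, by rw [hhdef]; simp⟩
  have hi0mem : pderiv i0 f ∈ Ideal.span (Set.range h) := by
    simp_rw [smul_eq_C_mul] at hg0
    rw [← Finset.add_sum_erase _ _ (Finset.mem_univ i0)] at hg0
    have h1 : C (g i0) * pderiv i0 f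
        = - ∑ i ∈ Finset.univ.erase i0, C (g i) * pderiv i f := by
      linear_combination hg0
    have h2 : pderiv i0 f = C (g i0)⁻¹ * (C (g i0) * pderiv i0 f) := by
      rw [← mul_assoc, ← C_mul, inv_mul_cancel₀ hgi0, C_1, one_mul]
    rw [h2, h1]
    apply Ideal.mul_mem_left
    apply Submodule.neg_mem
    apply Ideal.sum_mem
    intro i hi
    exact Ideal.mul_mem_left _ _ (hhii i (Finset.mem_erase.mp hi).1)
  have hpmem : ∀ i : Fin n, pderiv i f ∈ Ideal.span (Set.range h) := by
    intro i
    by_cases hii : i = i0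
    · rw [hii]; exact hi0mem
    · exact hhii i hii
  have hfmem : f ∈ Ideal.span (Set.range h) := by
    have heuler := euler (R := k) hhom
    have hnat : (d : ℕ) • f = C (d : k) * f := by
      rw [← smul_eq_C_mul, ← Nat.cast_smul_eq_nsmul k]
    have h2 : f = C ((d : k))⁻¹ * ((d : ℕ) • f) := by
      rw [hnat, ← mul_assoc, ← C_mul, inv_mul_cancel₀ hdk, C_1, one_mul]
    rw [h2, ← heuler]
    apply Ideal.mul_mem_left
    apply Ideal.sum_mem
    intro i _
    exact Ideal.mul_mem_left _ _ (hpmem i)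
  have hspan : Ideal.span ({f} ∪ Set.range fun j => pderiv j f)
      ≤ Ideal.span (Set.range h) := by
    rw [Ideal.span_le]
    rintro x (rfl | ⟨i, rfl⟩)
    · exact hfmem
    · exact hpmem i
  have hrad : ∀ i : Fin n, ∃ N, X i ^ N ∈ Ideal.span (Set.range h) := by
    intro i
    have hx : X i ∈ (Ideal.span ({f} ∪ Set.range fun j => pderiv j f)).radical := by
      rw [hiso]
      exact Ideal.subset_span ⟨i, rfl⟩
    obtain ⟨N, hNx⟩ := hx
    exact ⟨N, hspan hNx⟩
  exact count (by omega) (by omega) h (fun t => pderiv_isHomogeneous hhom _) hrad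

end Indep

section Kaehler

variable {k : Type*} [Field k] {n : ℕ} {R : Type*} [CommRing R] [Algebra k R]
  (pi : MvPolynomial (Fin n) k →ₐ[k] R)

lemma D_mem_span (p : MvPolynomial (Fin n) k) :
    (KaehlerDifferential.D k R) (pi p) ∈
      Submodule.span R (Set.range fun i : Fin n =>
        (KaehlerDifferential.D k R) (pi (X i))) := by
  induction p using MvPolynomial.induction_on with
  | C a =>
    rw [show (C a : MvPolynomial (Fin n) k) = algebraMap k _ a from rfl, AlgHom.commutes,
      Derivation.map_algebraMap]
    exact Submodule.zero_mem _
  | add p q hp hq =>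
    rw [map_add, map_add]
    exact Submodule.add_mem _ hp hq
  | mul_X p i hp =>
    rw [map_mul, Derivation.leibniz]
    exact Submodule.add_mem _
      (Submodule.smul_mem _ _ (Submodule.subset_span ⟨i, rfl⟩))
      (Submodule.smul_mem _ _ hp)

lemma span_dX (hs : Function.Surjective pi) :
    Submodule.span R (Set.range fun i : Fin n =>
      (KaehlerDifferential.D k R) (pi (X i))) = ⊤ := by
  apply le_antisymm le_top
  rw [← KaehlerDifferential.span_range_derivation k R, Submodule.span_le]
  rintro y ⟨r, rfl⟩
  obtain ⟨p, rfl⟩ := hs r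
  exact D_mem_span pi p

lemma D_formula (p : MvPolynomial (Fin n) k) :
    (KaehlerDifferential.D k R) (pi p)
      = ∑ i : Fin n, pi (pderiv i p) • (KaehlerDifferential.D k R) (pi (X i)) := by
  induction p using MvPolynomial.induction_on with
  | C a =>
    have h0 : (KaehlerDifferential.D k R) (pi (C a)) = 0 := by
      rw [show (C a : MvPolynomial (Fin n) k) = algebraMap k _ a from rfl, AlgHom.commutes,
        Derivation.map_algebraMap]
    rw [h0]
    symm
    apply Finset.sum_eq_zero
    intro i _
    rw [pderiv_C, map_zero, zero_smul]
  | add p q hp hq =>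
    rw [map_add, map_add, hp, hq, ← Finset.sum_add_distrib]
    apply Finset.sum_congr rfl
    intro i _
    rw [map_add, map_add, add_smul]
  | mul_X p j hp =>
    rw [map_mul, Derivation.leibniz, hp]
    have hps : ∀ i : Fin n, pi (pderiv i (p * X j))
        = pi (pderiv i p) * pi (X j) + pi p * pi (pderiv i (X j)) := by
      intro i
      rw [pderiv_mul, map_add, map_mul, map_mul]
    simp_rw [hps, add_smul]
    rw [Finset.sum_add_distrib, add_comm (pi p • (KaehlerDifferential.D k R) (pi (X j))) _]
    congr 1
    · rw [Finset.smul_sum]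
      apply Finset.sum_congr rfl
      intro i _
      rw [smul_smul, mul_comm]
    · rw [Finset.sum_eq_single j]
      · rw [pderiv_X_self, map_one, mul_one]
      · intro i _ hij
        rw [pderiv_X_of_ne (Ne.symm hij), map_zero, mul_zero, zero_smul]
      · intro hju
        exact absurd (Finset.mem_univ j) hju

lemma syzygy_dX {f : MvPolynomial (Fin n) k} (hf : pi f = 0) :
    ∑ i : Fin n, pi (pderiv i f) • (KaehlerDifferential.D k R) (pi (X i)) = 0 := by
  rw [← D_formula, hf, map_zero]

end Kaehler

end Stmt7Aux

/-- Let `n ≥ 4` and let `f` be homogeneous of degree `d ≥ 2` with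
`d` invertible in `k`, such that `R = k[x₁,…,xₙ]/(f)` is a domain with an
isolated singularity at the origin.  Then for every `q ≥ 1` there is no
surjection `Sym^q(Ω_{R/k}) ↠ R`: the free rank of every symmetric power of the
Kähler differentials vanishes. -/
theorem stmt7 {k : Type*} [Field k] {n : ℕ} (hn : 4 ≤ n)
    (f : MvPolynomial (Fin n) k) {d : ℕ} (hd : 2 ≤ d) (hdk : (d : k) ≠ 0)
    (hhom : f.IsHomogeneous d)
    (hiso : (Ideal.span ({f} ∪ Set.range fun j => pderiv j f)).radical
      = Ideal.span (Set.range (X : Fin n → MvPolynomial (Fin n) k)))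
    (R : Type*) [CommRing R] [Algebra k R] [IsDomain R]
    (e : (MvPolynomial (Fin n) k ⧸ Ideal.span {f}) ≃ₐ[k] R) :
    ∀ q : ℕ, 1 ≤ q →
      ¬ ∃ φ : SymPow R (Ω[R⁄k]) q →ₗ[R] R, Function.Surjective φ := by
  classical
  intro q hq
  rintro ⟨φ, hφ⟩
  set pi : MvPolynomial (Fin n) k →ₐ[k] R :=
    e.toAlgHom.comp (Ideal.Quotient.mkₐ k (Ideal.span {f})) with hpidef
  have hpiapp : ∀ x : MvPolynomial (Fin n) k,
      pi x = e (Ideal.Quotient.mk (Ideal.span {f}) x) := fun x => rfl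
  have hπs : Function.Surjective pi := by
    intro r
    obtain ⟨y, hy⟩ := e.surjective r
    obtain ⟨p, hp⟩ := Ideal.Quotient.mk_surjective (I := Ideal.span {f}) y
    exact ⟨p, by rw [hpiapp, hp, hy]⟩
  have hker : ∀ x : MvPolynomial (Fin n) k, pi x = 0 ↔ x ∈ Ideal.span {f} := by
    intro x
    constructor
    · intro hx
      rw [hpiapp] at hx
      have h1 : Ideal.Quotient.mk (Ideal.span {f}) x = 0 := by
        apply e.injective
        rw [map_zero]
        exact hx
      rwa [Ideal.Quotient.eq_zero_iff_mem] at h1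
    · intro hx
      rw [hpiapp, Ideal.Quotient.eq_zero_iff_mem.mpr hx, map_zero]
  have hπf : pi f = 0 := (hker f).mpr (Ideal.subset_span rfl)
  have hind := Stmt7Aux.indep (by omega) hd hdk hhom hiso
  set dX : Fin n → Ω[R⁄k] := fun i => (KaehlerDifferential.D k R) (pi (X i)) with hdX
  have hspan : Submodule.span R (Set.range dX) = ⊤ := by
    rw [hdX]
    exact Stmt7Aux.span_dX pi hπs
  set M : MultilinearMap R (fun _ : Fin q => Ω[R⁄k]) R :=
    (φ.comp (symRel R (Ω[R⁄k]) q).mkQ).compMultilinearMap (PiTensorProduct.tprod R) with hM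
  set i₀ : Fin q := ⟨0, hq⟩ with hi₀
  set B : (Fin q → Fin n) → R := fun r => M (fun s => dX (r s)) with hB
  -- 1 lies in the span of the B's
  have hone : (1 : R) ∈ Submodule.span R (Set.range B) := by
    have h1 : Function.Surjective (φ.comp (symRel R (Ω[R⁄k]) q).mkQ) :=
      hφ.comp (Submodule.mkQ_surjective _)
    obtain ⟨t, ht⟩ := h1 1
    have ht2 : t ∈ Submodule.span R (Set.range (PiTensorProduct.tprod R)) := by
      rw [PiTensorProduct.span_tprod_eq_top]
      trivial
    have h3 : (1 : R) ∈ Submodule.map (φ.comp (symRel R (Ω[R⁄k]) q).mkQ)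
        (Submodule.span R (Set.range (PiTensorProduct.tprod R))) := ⟨t, ht2, ht⟩
    rw [Submodule.map_span] at h3
    refine Submodule.span_le.mpr ?_ h3
    rintro y ⟨x, ⟨v, rfl⟩, rfl⟩
    have hv : ∀ s : Fin q, ∃ c : Fin n → R, ∑ i, c i • dX i = v s := by
      intro s
      have hvm : v s ∈ Submodule.span R (Set.range dX) := by
        rw [hspan]
        trivial
      exact (Submodule.mem_span_range_iff_exists_fun _).mp hvm
    choose c hc using hv
    have hMv : (φ.comp (symRel R (Ω[R⁄k]) q).mkQ) ((PiTensorProduct.tprod R) v) = M v := rfl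
    rw [hMv]
    have hveq : v = fun s => ∑ i : Fin n, c s i • dX i := by
      funext s
      rw [hc s]
    rw [hveq, MultilinearMap.map_sum]
    apply Submodule.sum_mem
    intro r _
    rw [MultilinearMap.map_smul_univ]
    exact Submodule.smul_mem _ _ (Submodule.subset_span ⟨r, rfl⟩)
  obtain ⟨w, hw⟩ := (Submodule.mem_span_range_iff_exists_fun _).mp hone
  -- the syzygy vectors
  set vec : (Fin q → Fin n) → Fin n → R :=
    fun r i => M (Function.update (fun s => dX (r s)) i₀ (dX i)) with hvec
  have hsyzD : ∑ i, pi (pderiv i f) • dX i = 0 := by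
    rw [hdX]
    exact Stmt7Aux.syzygy_dX pi hπf
  have hsyz : ∀ r : Fin q → Fin n, ∑ i, pi (pderiv i f) • vec r i = 0 := by
    intro r
    have h4 : (M.toLinearMap (fun s => dX (r s)) i₀) (∑ i, pi (pderiv i f) • dX i)
        = ∑ i, pi (pderiv i f) • vec r i := by
      rw [map_sum]
      apply Finset.sum_congr rfl
      intro i _
      rw [LinearMap.map_smul]
      rfl
    rw [← h4, hsyzD, map_zero]
  have hBvec : ∀ r : Fin q → Fin n, B r = vec r (r i₀) := by
    intro r
    rw [hvec, hB]
    simp only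
    congr 1
    exact (Function.update_eq_self i₀ _).symm
  -- lift to polynomials
  choose lift hlift using hπs
  set Cc : (Fin q → Fin n) → Fin n → MvPolynomial (Fin n) k :=
    fun r i => lift (vec r i) with hCc
  have hCc0 : ∀ r i, constantCoeff (Cc r i) = 0 := by
    intro r i
    -- the syzygy in the polynomial ring
    have hsyzP : ∑ i', pderiv i' f * Cc r i' ∈ Ideal.span {f} := by
      rw [← hker, map_sum]
      have : ∀ i' ∈ Finset.univ, pi (pderiv i' f * Cc r i')
          = pi (pderiv i' f) • vec r i' := by
        intro i' _
        rw [map_mul, hCc]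
        simp only
        rw [hlift, smul_eq_mul]
      rw [Finset.sum_congr rfl this]
      exact hsyz r
    obtain ⟨gq, hgq⟩ := Ideal.mem_span_singleton.mp hsyzP
    have h5 := congrArg (homogeneousComponent (d - 1)) hgq
    rw [map_sum] at h5
    have h6 : ∀ i' ∈ Finset.univ, homogeneousComponent (d - 1) (pderiv i' f * Cc r i')
        = C (constantCoeff (Cc r i')) * pderiv i' f := by
      intro i' _
      rw [mul_comm]
      have h7 := Stmt7Aux.comp_mul_right (Stmt7Aux.pderiv_isHomogeneous hhom i') (Cc r i') 0
      rw [zero_add] at h7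
      rw [h7, homogeneousComponent_zero, constantCoeff_eq]
    rw [Finset.sum_congr rfl h6] at h5
    have h8 : homogeneousComponent (d - 1) (f * gq) = 0 := by
      rw [mul_comm]
      exact Stmt7Aux.comp_mul_right_lt hhom gq (by omega)
    rw [h8] at h5
    have h9 : ∑ i', (constantCoeff (Cc r i')) • pderiv i' f = 0 := by
      simp_rw [smul_eq_C_mul]
      exact h5
    exact Fintype.linearIndependent_iff.mp hind _ h9 i
  -- final contradiction via constant coefficients
  have hfinal : pi (∑ r : Fin q → Fin n, lift (w r) * Cc r (r i₀)) = 1 := by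
    rw [map_sum]
    have : ∀ r ∈ Finset.univ, pi (lift (w r) * Cc r (r i₀)) = w r • B r := by
      intro r _
      rw [map_mul, hCc]
      simp only
      rw [hlift, hlift, hBvec r, smul_eq_mul]
    rw [Finset.sum_congr rfl this]
    exact hw
  have hker1 : (1 : MvPolynomial (Fin n) k) - ∑ r : Fin q → Fin n, lift (w r) * Cc r (r i₀)
      ∈ Ideal.span {f} := by
    rw [← hker, map_sub, map_one, hfinal, sub_self]
  obtain ⟨t, ht⟩ := Ideal.mem_span_singleton.mp hker1
  have happ := congrArg constantCoeff ht
  rw [map_sub, map_one, map_mul, map_sum] at happ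
  have hcf : constantCoeff f = 0 := by
    rw [constantCoeff_eq]
    apply hhom.coeff_eq_zero
    simp only [map_zero]
    omega
  have hz : ∀ r ∈ Finset.univ,
      constantCoeff (lift (w r) * Cc r (r i₀)) = 0 := by
    intro r _
    rw [map_mul, hCc0, mul_zero]
  rw [Finset.sum_congr rfl hz, Finset.sum_const_zero, sub_zero, hcf, zero_mul] at happ
  exact one_ne_zero happ
end
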